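/- Let X be a Dedekind complete Riesz space with weak order unit e, let T be a conditional expectation operator on X with Te = e, and assume X is T-universally complete. Let (x_n) be an order bounded sequence of positive elements of X such that the partial sums ∑_{k=1}^{n} T x_k, n ≥ 1, are order bounded in X. Then lim sup_n x_n = 0, that is, inf_{n≥1} sup_{k≥n} x_k = 0. -/

import Mathlib

theorem stmt2 {X : Type u} [ConditionallyCompleteLattice X] [AddCommGroup X]
    [CovariantClass X X (· + ·) (· ≤ ·)] [Module ℝ X] [PosSMulMono ℝ X]
    -- weak order unit
    (e : X) (he : 0 < e) (hwu : ∀ z : X, 0 ≤ z → z ⊓ e = 0 → z = 0)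
    -- conditional expectation operator with `T e = e`
    (T : X →ₗ[ℝ] X)
    (hTpos : ∀ z : X, 0 ≤ z → 0 ≤ T z)
    (hTstrict : ∀ z : X, 0 ≤ z → T z = 0 → z = 0)
    (hTcont : ∀ S : Set X, S.Nonempty → DirectedOn (· ≥ ·) S → IsGLB S 0 →
      IsGLB (T '' S) 0)
    (hTidem : ∀ z : X, T (T z) = T z)
    (hTe : T e = e)
    -- `X` is `T`-universally complete
    (hTuniv : ∀ y : ℕ → X, (∀ n, 0 ≤ y n) → Monotone y →
      (∃ b : X, ∀ n, T (y n) ≤ b) → ∃ s : X, IsLUB (Set.range y) s)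
    -- an order bounded sequence of positive elements
    (x : ℕ → X) (hxpos : ∀ n, 0 ≤ x n) (hxbdd : ∃ b : X, ∀ n, x n ≤ b)
    -- the partial sums `∑_{k<N} T x_k` are order bounded in `X`
    (hsum : ∃ b : X, ∀ N : ℕ, ∑ k ∈ Finset.range N, T (x k) ≤ b) :
    (⨅ n : ℕ, ⨆ k : ℕ, x (n + k)) = 0 := by
  haveI : IsOrderedAddMonoid X :=
    { add_le_add_left := fun a b h c => by
        rw [add_comm a, add_comm b]; exact add_le_add_right h c }
  obtain ⟨b, hb⟩ := hsum
  set y : ℕ → X := fun n => ∑ k ∈ Finset.range n, x k with hy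
  have hypos : ∀ n, 0 ≤ y n := fun n => Finset.sum_nonneg fun k _ => hxpos k
  have hymono : Monotone y := fun m n hmn =>
    Finset.sum_le_sum_of_subset_of_nonneg (Finset.range_subset_range.2 hmn) (fun k _ _ => hxpos k)
  have hTy : ∀ n, T (y n) ≤ b := fun n => by
    have h : T (y n) = ∑ k ∈ Finset.range n, T (x k) := map_sum T x (Finset.range n)
    rw [h]; exact hb n
  obtain ⟨s, hs⟩ := hTuniv y hypos hymono ⟨b, hTy⟩
  have hys : ∀ n, y n ≤ s := fun n => hs.1 ⟨n, rfl⟩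
  have key : ∀ n k, x (n + k) ≤ s - y n := by
    intro n k
    have h1 : y n + x (n + k) ≤ y (n + k + 1) := by
      calc y n + x (n + k) ≤ y (n + k) + x (n + k) :=
            add_le_add_left (hymono (Nat.le_add_right n k)) _
        _ = y (n + k + 1) := (Finset.sum_range_succ x (n + k)).symm
    have h2 : y n + x (n + k) ≤ s := h1.trans (hys _)
    exact le_sub_iff_add_le'.2 h2
  have hbdd : ∀ n, BddAbove (Set.range fun k => x (n + k)) :=
    fun n => ⟨s - y n, by rintro _ ⟨k, rfl⟩; exact key n k⟩
  have hgpos : ∀ n, 0 ≤ ⨆ k, x (n + k) := fun n =>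
    (hxpos (n + 0)).trans (le_ciSup (hbdd n) 0)
  have hgle : ∀ n, (⨆ k, x (n + k)) ≤ s - y n := fun n => ciSup_le fun k => key n k
  have hbddbelow : BddBelow (Set.range fun n => ⨆ k, x (n + k)) :=
    ⟨0, by rintro _ ⟨n, rfl⟩; exact hgpos n⟩
  refine le_antisymm ?_ (le_ciInf hgpos)
  have h3 : ∀ n, (⨅ n, ⨆ k, x (n + k)) ≤ s - y n := fun n =>
    (ciInf_le hbddbelow n).trans (hgle n)
  have h4 : ∀ n, y n ≤ s - ⨅ n, ⨆ k, x (n + k) := fun n => le_sub_comm.1 (h3 n)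
  have h5 : s ≤ s - ⨅ n, ⨆ k, x (n + k) := hs.2 (by rintro _ ⟨n, rfl⟩; exact h4 n)
  exact (le_sub_self_iff s).1 h5
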